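/- Let n ≥ 2 and ℓ ≥ 2 be integers and M > 0. Set P = 2n² − 5n + 5, let F_n be the nonnegative square root of [ (3n²−12n+16)/4 − n²P/(4(2n²+P)) ] / (n−1)², and set E_n = 2F_n − 1. Then for every r > 0 with r^{n−1} ≥ 2M, one has r² ( V_{2,nℓ}(r) + V_{3,nℓ}(r) ) ≥ (n−1)² [ (E_n² − 1)/4 − 2M F_n² / r^{n−1} ]. -/

import Mathlib

set_option maxHeartbeats 2000000

/-- `D_{nℓ}(r) = n(n+1)M r^(1-n) + (ℓ-1)(n+ℓ)`. -/
noncomputable def Dnl (n ℓ : ℕ) (M r : ℝ) : ℝ :=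
  (n:ℝ)*((n:ℝ)+1)*M / r^(n-1) + ((ℓ:ℝ)-1)*((n:ℝ)+(ℓ:ℝ))

/-- `V_{2,nℓ}(r) = r^{-2}[ (n²-10n+16)/4 - ((3n²-12n+16)/4)(2M/r^{n-1}) ]`. -/
noncomputable def V2nl (n : ℕ) (M r : ℝ) : ℝ :=
  (((n:ℝ)^2 - 10*(n:ℝ) + 16)/4
    - ((3*(n:ℝ)^2 - 12*(n:ℝ) + 16)/4) * (2*M/r^(n-1))) / r^2

/-- The component `V_{3,nℓ}` of the Zerilli-type potential. -/
noncomputable def V3nl (n ℓ : ℕ) (M r : ℝ) : ℝ :=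
  (((ℓ:ℝ)-1)^2*((n:ℝ)+(ℓ:ℝ))^2*(n:ℝ)*((n:ℝ)+2)
    + 4*((ℓ:ℝ)-1)^3*((n:ℝ)+(ℓ:ℝ))^3
    - (6*((ℓ:ℝ)-1)*((n:ℝ)+(ℓ:ℝ))*((n:ℝ)-2)*(n:ℝ)^2*((n:ℝ)+1)*M
        + 6*((ℓ:ℝ)-1)^2*((n:ℝ)+(ℓ:ℝ))^2*((n:ℝ)-4)*(n:ℝ)*M) / r^(n-1)
    + (4*((ℓ:ℝ)-1)*((n:ℝ)+(ℓ:ℝ))*(n:ℝ)*((n:ℝ)+1)*(2*(n:ℝ)^2-3*(n:ℝ)+4)*M^2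
        + ((n:ℝ)-4)*((n:ℝ)-2)*(n:ℝ)^2*((n:ℝ)+1)^2*M^2) / r^(2*n-2)
    + 2*(n:ℝ)^4*((n:ℝ)+1)^2*M^3 / r^(3*n-3))
  / (4*r^2*(Dnl n ℓ M r)^2)

/-- The polynomial `P(n) = 2n² - 5n + 5`. -/
noncomputable def Pn (n : ℕ) : ℝ := 2*(n:ℝ)^2 - 5*(n:ℝ) + 5

/-- `F_n`: the nonnegative square root of
`[(3n²-12n+16)/4 - n²P(n)/(4(2n²+P(n)))]/(n-1)²`. -/
noncomputable def Fn (n : ℕ) : ℝ :=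
  Real.sqrt (((3*(n:ℝ)^2 - 12*(n:ℝ) + 16)/4
    - (n:ℝ)^2*Pn n/(4*(2*(n:ℝ)^2 + Pn n))) / ((n:ℝ)-1)^2)

/-- `E_n = 2F_n - 1`. -/
noncomputable def En (n : ℕ) : ℝ := 2*Fn n - 1

/-- Cleared-denominator form of the decisive inequality. -/
noncomputable def Hpoly (nr l x : ℝ) : ℝ :=
  (4*l^3 + nr*(nr+2)*l^2 - (3*l*(nr-2)*nr^2*(nr+1) + 3*l^2*(nr-4)*nr)*x
    + (l*nr*(nr+1)*(2*nr^2-3*nr+4) + (nr-4)*(nr-2)*nr^2*(nr+1)^2/4)*x^2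
    + nr^4*(nr+1)^2/4*x^3) * (16*nr^2-20*nr+20)
  - ((10*nr^4-58*nr^3+134*nr^2-140*nr+80)
     - ((nr^2-10*nr+16)/4)*(16*nr^2-20*nr+20)
     - (nr-1)*((789*nr-1780)/1000)*(16*nr^2-20*nr+20)
     + nr^2*(2*nr^2-5*nr+5)*x) * (2*l + nr*(nr+1)*x)^2

private lemma aux_quad (A B C b v : ℝ) (hA : 0 ≤ A) (hC : 0 ≤ C) (hD : B^2 ≤ 4*A*C)
    (hb : 0 ≤ b) (hv : 0 ≤ v) : 0 ≤ A*b^2 + B*b*v + C*v^2 := by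
  rcases eq_or_lt_of_le hA with h|h
  · have hB : B = 0 := by nlinarith [sq_nonneg B]
    rw [hB, ← h]
    nlinarith [mul_nonneg hC (sq_nonneg v)]
  · nlinarith [sq_nonneg (2*A*b + B*v), mul_nonneg (sub_nonneg.mpr hD) (sq_nonneg v),
      mul_pos h h, sq_nonneg b, sq_nonneg v]

private lemma auxe2 (m : ℝ) (hm : 0 ≤ m) : (0:ℝ) ≤ (20817944/125) + (53652568/125)*m + (2249424/5)*m^2 + (28316346/125)*m^3 + (1996329/50)*m^4 + (-1255028/125)*m^5 + (-557461/125)*m^6 + (4618/25)*m^7 + (67981/250)*m^8 + (784/25)*m^9 := by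
  have hA : (0:ℝ) ≤ m^4*((m-3)^2*((m+3)^2+18)) := by positivity
  have hB : (0:ℝ) ≤ m^3*((m-4)^2*(3*m^3+24*m^2+64*m+128)) :=
    mul_nonneg (pow_nonneg hm 3) (mul_nonneg (sq_nonneg _) (by nlinarith [hm, pow_nonneg hm 2, pow_nonneg hm 3]))
  nlinarith [hA, hB, hm, pow_nonneg hm 2, pow_nonneg hm 3, pow_nonneg hm 4, pow_nonneg hm 5, pow_nonneg hm 6, pow_nonneg hm 7, pow_nonneg hm 8, pow_nonneg hm 9]

private lemma auxp1 (m : ℝ) (hm : 0 ≤ m) : (0:ℝ) ≤ (14279168/125) + (48074496/125)*m + (73715488/125)*m^2 + (67563104/125)*m^3 + (40854464/125)*m^4 + (16962664/125)*m^5 + (4852158/125)*m^6 + (921124/125)*m^7 + (104422/125)*m^8 + (5312/125)*m^9 := by nlinarith [hm, pow_nonneg hm 2, pow_nonneg hm 3, pow_nonneg hm 4, pow_nonneg hm 5, pow_nonneg hm 6, pow_nonneg hm 7, pow_nonneg hm 8, pow_nonneg hm 9]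
private lemma auxp2 (m : ℝ) (hm : 0 ≤ m) : (0:ℝ) ≤ (16156544/125) + (46718816/125)*m + (59015648/125)*m^2 + (42307264/125)*m^3 + (18964048/125)*m^4 + (5740882/125)*m^5 + (1333888/125)*m^6 + (265074/125)*m^7 + (38532/125)*m^8 + (2624/125)*m^9 := by nlinarith [hm, pow_nonneg hm 2, pow_nonneg hm 3, pow_nonneg hm 4, pow_nonneg hm 5, pow_nonneg hm 6, pow_nonneg hm 7, pow_nonneg hm 8, pow_nonneg hm 9]
private lemma auxp3 (m : ℝ) (hm : 0 ≤ m) : (0:ℝ) ≤ (32151368/125) + (83131752/125)*m + (88163344/125)*m^2 + (1853054/5)*m^3 + (854383/10)*m^4 + (213934/125)*m^5 + (129861/125)*m^6 + (316672/125)*m^7 + (39019/50)*m^8 + (368/5)*m^9 := by nlinarith [hm, pow_nonneg hm 2, pow_nonneg hm 3, pow_nonneg hm 4, pow_nonneg hm 5, pow_nonneg hm 6, pow_nonneg hm 7, pow_nonneg hm 8, pow_nonneg hm 9]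
private lemma auxp4 (m : ℝ) (hm : 0 ≤ m) : (0:ℝ) ≤ (9955584/125) + (30700352/125)*m + (42350656/125)*m^2 + (34077888/125)*m^3 + (3503552/25)*m^4 + (5934892/125)*m^5 + (1310856/125)*m^6 + (174348/125)*m^7 + (10624/125)*m^8 := by nlinarith [hm, pow_nonneg hm 2, pow_nonneg hm 3, pow_nonneg hm 4, pow_nonneg hm 5, pow_nonneg hm 6, pow_nonneg hm 7, pow_nonneg hm 8]
private lemma auxp5 (m : ℝ) (hm : 0 ≤ m) : (0:ℝ) ≤ (11384928/125) + (32308096/125)*m + (8057152/25)*m^2 + (28714152/125)*m^3 + (2574218/25)*m^4 + (3838614/125)*m^5 + (797358/125)*m^6 + (22442/25)*m^7 + (7936/125)*m^8 := by nlinarith [hm, pow_nonneg hm 2, pow_nonneg hm 3, pow_nonneg hm 4, pow_nonneg hm 5, pow_nonneg hm 6, pow_nonneg hm 7, pow_nonneg hm 8]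
private lemma auxp6 (m : ℝ) (hm : 0 ≤ m) : (0:ℝ) ≤ (13786272/125) + (7391568/25)*m + (42519864/125)*m^2 + (26879916/125)*m^3 + (2008184/25)*m^4 + (2328836/125)*m^5 + (78672/25)*m^6 + (59072/125)*m^7 + (5248/125)*m^8 := by nlinarith [hm, pow_nonneg hm 2, pow_nonneg hm 3, pow_nonneg hm 4, pow_nonneg hm 5, pow_nonneg hm 6, pow_nonneg hm 7, pow_nonneg hm 8]
private lemma auxp7 (m : ℝ) (hm : 0 ≤ m) : (0:ℝ) ≤ (17159616/125) + (44649584/125)*m + (49052968/125)*m^2 + (5715036/25)*m^3 + 72218*m^4 + (1405558/125)*m^5 + (98862/125)*m^6 + (14934/125)*m^7 + (512/25)*m^8 := by nlinarith [hm, pow_nonneg hm 2, pow_nonneg hm 3, pow_nonneg hm 4, pow_nonneg hm 5, pow_nonneg hm 6, pow_nonneg hm 7, pow_nonneg hm 8]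
private lemma auxp8 (m : ℝ) (hm : 0 ≤ m) : (0:ℝ) ≤ (2300448/125) + (6430432/125)*m + (7832224/125)*m^2 + (1069336/25)*m^3 + (87822/5)*m^4 + (544724/125)*m^5 + (77926/125)*m^6 + (5312/125)*m^7 := by nlinarith [hm, pow_nonneg hm 2, pow_nonneg hm 3, pow_nonneg hm 4, pow_nonneg hm 5, pow_nonneg hm 6, pow_nonneg hm 7]
private lemma auxp9 (m : ℝ) (hm : 0 ≤ m) : (0:ℝ) ≤ (2540448/125) + (6886432/125)*m + (8092224/125)*m^2 + (1059336/25)*m^3 + (83022/5)*m^4 + (494724/125)*m^5 + (70926/125)*m^6 + (5312/125)*m^7 := by nlinarith [hm, pow_nonneg hm 2, pow_nonneg hm 3, pow_nonneg hm 4, pow_nonneg hm 5, pow_nonneg hm 6, pow_nonneg hm 7]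
private lemma auxp10 (m : ℝ) (hm : 0 ≤ m) : (0:ℝ) ≤ (2780448/125) + (7342432/125)*m + (8352224/125)*m^2 + (1049336/25)*m^3 + (78222/5)*m^4 + (444724/125)*m^5 + (63926/125)*m^6 + (5312/125)*m^7 := by nlinarith [hm, pow_nonneg hm 2, pow_nonneg hm 3, pow_nonneg hm 4, pow_nonneg hm 5, pow_nonneg hm 6, pow_nonneg hm 7]
private lemma auxp11 (m : ℝ) (hm : 0 ≤ m) : (0:ℝ) ≤ (3020448/125) + (7798432/125)*m + (8612224/125)*m^2 + (1039336/25)*m^3 + (73422/5)*m^4 + (394724/125)*m^5 + (56926/125)*m^6 + (5312/125)*m^7 := by nlinarith [hm, pow_nonneg hm 2, pow_nonneg hm 3, pow_nonneg hm 4, pow_nonneg hm 5, pow_nonneg hm 6, pow_nonneg hm 7]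
private lemma auxp12 (m : ℝ) (hm : 0 ≤ m) : (0:ℝ) ≤ 1408 + 3520*m + 3680*m^2 + 2000*m^3 + 560*m^4 + 64*m^5 := by nlinarith [hm, pow_nonneg hm 2, pow_nonneg hm 3, pow_nonneg hm 4, pow_nonneg hm 5]
private lemma auxp13 (m : ℝ) (hm : 0 ≤ m) : (0:ℝ) ≤ (1177929216/125) + (1638457056/125)*m + (1100720008/125)*m^2 + (112540082/25)*m^3 + (102250619/50)*m^4 + (90621194/125)*m^5 + (21670989/125)*m^6 + (3202232/125)*m^7 + (105259/50)*m^8 + (368/5)*m^9 := by nlinarith [hm, pow_nonneg hm 2, pow_nonneg hm 3, pow_nonneg hm 4, pow_nonneg hm 5, pow_nonneg hm 6, pow_nonneg hm 7, pow_nonneg hm 8, pow_nonneg hm 9]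
private lemma auxp14 (m : ℝ) (hm : 0 ≤ m) : (0:ℝ) ≤ (116130816/25) + (1013612096/125)*m + (894508656/125)*m^2 + (538937068/125)*m^3 + (47258733/25)*m^4 + (14699146/25)*m^5 + (15464014/125)*m^6 + (2070814/125)*m^7 + (158597/125)*m^8 + (1056/25)*m^9 := by nlinarith [hm, pow_nonneg hm 2, pow_nonneg hm 3, pow_nonneg hm 4, pow_nonneg hm 5, pow_nonneg hm 6, pow_nonneg hm 7, pow_nonneg hm 8, pow_nonneg hm 9]
private lemma auxp15 (m : ℝ) (hm : 0 ≤ m) : (0:ℝ) ≤ 204800 + 389120*m + 323072*m^2 + 153088*m^3 + 45280*m^4 + 8560*m^5 + 1010*m^6 + 68*m^7 + 2*m^8 := by nlinarith [hm, pow_nonneg hm 2, pow_nonneg hm 3, pow_nonneg hm 4, pow_nonneg hm 5, pow_nonneg hm 6, pow_nonneg hm 7, pow_nonneg hm 8]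
private lemma auxp16 (m : ℝ) (hm : 0 ≤ m) : (0:ℝ) ≤ (729580032/125) + (1013373632/125)*m + (587952736/125)*m^2 + (37156796/25)*m^3 + (7212654/25)*m^4 + (4993238/125)*m^5 + (594658/125)*m^6 + (55894/125)*m^7 + (512/25)*m^8 := by nlinarith [hm, pow_nonneg hm 2, pow_nonneg hm 3, pow_nonneg hm 4, pow_nonneg hm 5, pow_nonneg hm 6, pow_nonneg hm 7, pow_nonneg hm 8]
private lemma auxp17 (m : ℝ) (hm : 0 ≤ m) : (0:ℝ) ≤ (140962816/125) + (208232576/125)*m + (132655328/125)*m^2 + (9550584/25)*m^3 + (2137142/25)*m^4 + (1524044/125)*m^5 + (131294/125)*m^6 + (5312/125)*m^7 := by nlinarith [hm, pow_nonneg hm 2, pow_nonneg hm 3, pow_nonneg hm 4, pow_nonneg hm 5, pow_nonneg hm 6, pow_nonneg hm 7]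
private lemma auxp18 (m : ℝ) (hm : 0 ≤ m) : (0:ℝ) ≤ (17135104/5) + (177714528/25)*m + (831655944/125)*m^2 + (461282714/125)*m^3 + (334215639/250)*m^4 + (8195756/25)*m^5 + 54349*m^6 + (732946/125)*m^7 + (93207/250)*m^8 + (1328/125)*m^9 := by nlinarith [hm, pow_nonneg hm 2, pow_nonneg hm 3, pow_nonneg hm 4, pow_nonneg hm 5, pow_nonneg hm 6, pow_nonneg hm 7, pow_nonneg hm 8, pow_nonneg hm 9]
private lemma auxp19 (m : ℝ) (hm : 0 ≤ m) : (0:ℝ) ≤ 50176 + 65280*m + 34240*m^2 + 9040*m^3 + 1200*m^4 + 64*m^5 := by nlinarith [hm, pow_nonneg hm 2, pow_nonneg hm 3, pow_nonneg hm 4, pow_nonneg hm 5]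
private lemma auxp20 (m : ℝ) (hm : 0 ≤ m) : (0:ℝ) ≤ 289280 + 513856*m + 395520*m^2 + 170884*m^3 + 44724*m^4 + 7084*m^5 + 628*m^6 + 24*m^7 := by nlinarith [hm, pow_nonneg hm 2, pow_nonneg hm 3, pow_nonneg hm 4, pow_nonneg hm 5, pow_nonneg hm 6, pow_nonneg hm 7]
set_option maxHeartbeats 4000000 in
private lemma auxd1 (m : ℝ) (hm : 0 ≤ m) : ((-2499584/25) + (-131202304/125)*m + (-186642784/125)*m^2 + (-119999072/125)*m^3 + (-8657106/25)*m^4 + (-1873814/25)*m^5 + (-1213486/125)*m^6 + (-87146/125)*m^7 + (-2688/125)*m^8)^2 ≤ 4*((140962816/125) + (208232576/125)*m + (132655328/125)*m^2 + (9550584/25)*m^3 + (2137142/25)*m^4 + (1524044/125)*m^5 + (131294/125)*m^6 + (5312/125)*m^7)*((17135104/5) + (177714528/25)*m + (831655944/125)*m^2 + (461282714/125)*m^3 + (334215639/250)*m^4 + (8195756/25)*m^5 + 54349*m^6 + (732946/125)*m^7 + (93207/250)*m^8 + (1328/125)*m^9) := by nlinarith [hm, pow_nonneg hm 2, pow_nonneg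 hm 3, pow_nonneg hm 4, pow_nonneg hm 5, pow_nonneg hm 6, pow_nonneg hm 7, pow_nonneg hm 8, pow_nonneg hm 9, pow_nonneg hm 10, pow_nonneg hm 11, pow_nonneg hm 12, pow_nonneg hm 13, pow_nonneg hm 14, pow_nonneg hm 15, pow_nonneg hm 16, pow_nonneg hm 17, pow_nonneg hm 18]
set_option maxHeartbeats 4000000 in
private lemma auxd2 (m : ℝ) (hm : 0 ≤ m) : (-17408 + -66304*m + -68800*m^2 + -33040*m^3 + -8320*m^4 + -1072*m^5 + -56*m^6)^2 ≤ 4*(50176 + 65280*m + 34240*m^2 + 9040*m^3 + 1200*m^4 + 64*m^5)*(289280 + 513856*m + 395520*m^2 + 170884*m^3 + 44724*m^4 + 7084*m^5 + 628*m^6 + 24*m^7) := by nlinarith [hm, pow_nonneg hm 2, pow_nonneg hm 3, pow_nonneg hm 4, pow_nonneg hm 5, pow_nonneg hm 6, pow_nonneg hm 7, pow_nonneg hm 8, pow_nonneg hm 9, pow_nonneg hm 10, pow_nonneg hm 11, pow_nonneg hm 12, pow_nonneg hm 13, pow_nonneg hm 14, pow_nonneg hm 15, pow_nonneg hm 16,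 pow_nonneg hm 17, pow_nonneg hm 18]

set_option maxHeartbeats 8000000 in
private lemma aux_region1 (nr b xx : ℝ) (hn : 2 ≤ nr) (hb : 0 ≤ b) (hx : 0 ≤ xx)
    (hw3 : nr*xx ≤ 3) : 0 ≤ Hpoly nr (nr+2+b) xx := by
  have hm : (0:ℝ) ≤ nr - 2 := by linarith
  have hw : (0:ℝ) ≤ nr*xx := mul_nonneg (by linarith) hx
  have hu : (0:ℝ) ≤ 3 - nr*xx := by linarith
  have hg0 : (0:ℝ) ≤ (1:ℝ)*((14279168/125) + (48074496/125)*(nr-2) + (73715488/125)*(nr-2)^2 + (67563104/125)*(nr-2)^3 + (40854464/125)*(nr-2)^4 + (16962664/125)*(nr-2)^5 + (4852158/125)*(nr-2)^6 + (921124/125)*(nr-2)^7 + (104422/125)*(nr-2)^8 + (5312/125)*(nr-2)^9)*(nr*xx)^0*(3-nr*xx)^3 + (3:ℝ)*((16156544/125) + (46718816/125)*(nr-2) + (59015648/125)*(nr-2)^2 + (42307264/125)*(nr-2)^3 + (18964048/125)*(nr-2)^4 + (5740882/125)*(nr-2)^5 + (1333888/125)*(nr-2)^6 + (265074/125)*(nr-2)^7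 + (38532/125)*(nr-2)^8 + (2624/125)*(nr-2)^9)*(nr*xx)^1*(3-nr*xx)^2 + (1:ℝ)*((32151368/125) + (83131752/125)*(nr-2) + (88163344/125)*(nr-2)^2 + (1853054/5)*(nr-2)^3 + (854383/10)*(nr-2)^4 + (213934/125)*(nr-2)^5 + (129861/125)*(nr-2)^6 + (316672/125)*(nr-2)^7 + (39019/50)*(nr-2)^8 + (368/5)*(nr-2)^9)*(nr*xx)^3*(3-nr*xx)^0 := by
    have l1 := mul_nonneg (mul_nonneg (mul_nonneg (by norm_num : (0:ℝ) ≤ (1:ℝ)) (auxp1 (nr-2) hm)) (pow_nonneg hw 0)) (pow_nonneg hu 3)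
    have l2 := mul_nonneg (mul_nonneg (mul_nonneg (by norm_num : (0:ℝ) ≤ (3:ℝ)) (auxp2 (nr-2) hm)) (pow_nonneg hw 1)) (pow_nonneg hu 2)
    have l3 := mul_nonneg (mul_nonneg (mul_nonneg (by norm_num : (0:ℝ) ≤ (1:ℝ)) (auxp3 (nr-2) hm)) (pow_nonneg hw 3)) (pow_nonneg hu 0)
    linarith [l1, l2, l3]
  have hb0 : (0:ℝ) ≤ b^0*((1:ℝ)*((14279168/125) + (48074496/125)*(nr-2) + (73715488/125)*(nr-2)^2 + (67563104/125)*(nr-2)^3 + (40854464/125)*(nr-2)^4 + (16962664/125)*(nr-2)^5 + (4852158/125)*(nr-2)^6 + (921124/125)*(nr-2)^7 + (104422/125)*(nr-2)^8 + (5312/125)*(nr-2)^9)*(nr*xx)^0*(3-nr*xx)^3 + (3:ℝ)*((16156544/125) + (46718816/125)*(nr-2) + (59015648/125)*(nr-2)^2 + (42307264/125)*(nr-2)^3 + (18964048/125)*(nr-2)^4 + (5740882/125)*(nr-2)^5 + (1333888/125)*(nr-2)^6 + (265074/125)*(nr-2)^7 + (38532/125)*(nr-2)^8 + (2624/125)*(nr-2)^9)*(nr*xx)^1*(3-nr*xx)^2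 + (1:ℝ)*((32151368/125) + (83131752/125)*(nr-2) + (88163344/125)*(nr-2)^2 + (1853054/5)*(nr-2)^3 + (854383/10)*(nr-2)^4 + (213934/125)*(nr-2)^5 + (129861/125)*(nr-2)^6 + (316672/125)*(nr-2)^7 + (39019/50)*(nr-2)^8 + (368/5)*(nr-2)^9)*(nr*xx)^3*(3-nr*xx)^0) := mul_nonneg (pow_nonneg hb 0) hg0
  have hg1 : (0:ℝ) ≤ (1:ℝ)*((9955584/125) + (30700352/125)*(nr-2) + (42350656/125)*(nr-2)^2 + (34077888/125)*(nr-2)^3 + (3503552/25)*(nr-2)^4 + (5934892/125)*(nr-2)^5 + (1310856/125)*(nr-2)^6 + (174348/125)*(nr-2)^7 + (10624/125)*(nr-2)^8)*(nr*xx)^0*(3-nr*xx)^3 + (3:ℝ)*((11384928/125) + (32308096/125)*(nr-2) + (8057152/25)*(nr-2)^2 + (28714152/125)*(nr-2)^3 + (2574218/25)*(nr-2)^4 + (3838614/125)*(nr-2)^5 + (797358/125)*(nr-2)^6 + (22442/25)*(nr-2)^7 + (7936/125)*(nr-2)^8)*(nr*xx)^1*(3-nr*xx)^2 + (3:ℝ)*((13786272/125)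 + (7391568/25)*(nr-2) + (42519864/125)*(nr-2)^2 + (26879916/125)*(nr-2)^3 + (2008184/25)*(nr-2)^4 + (2328836/125)*(nr-2)^5 + (78672/25)*(nr-2)^6 + (59072/125)*(nr-2)^7 + (5248/125)*(nr-2)^8)*(nr*xx)^2*(3-nr*xx)^1 + (1:ℝ)*((17159616/125) + (44649584/125)*(nr-2) + (49052968/125)*(nr-2)^2 + (5715036/25)*(nr-2)^3 + 72218*(nr-2)^4 + (1405558/125)*(nr-2)^5 + (98862/125)*(nr-2)^6 + (14934/125)*(nr-2)^7 + (512/25)*(nr-2)^8)*(nr*xx)^3*(3-nr*xx)^0 := by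
    have l1 := mul_nonneg (mul_nonneg (mul_nonneg (by norm_num : (0:ℝ) ≤ (1:ℝ)) (auxp4 (nr-2) hm)) (pow_nonneg hw 0)) (pow_nonneg hu 3)
    have l2 := mul_nonneg (mul_nonneg (mul_nonneg (by norm_num : (0:ℝ) ≤ (3:ℝ)) (auxp5 (nr-2) hm)) (pow_nonneg hw 1)) (pow_nonneg hu 2)
    have l3 := mul_nonneg (mul_nonneg (mul_nonneg (by norm_num : (0:ℝ) ≤ (3:ℝ)) (auxp6 (nr-2) hm)) (pow_nonneg hw 2)) (pow_nonneg hu 1)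
    have l4 := mul_nonneg (mul_nonneg (mul_nonneg (by norm_num : (0:ℝ) ≤ (1:ℝ)) (auxp7 (nr-2) hm)) (pow_nonneg hw 3)) (pow_nonneg hu 0)
    linarith [l1, l2, l3, l4]
  have hb1 : (0:ℝ) ≤ b^1*((1:ℝ)*((9955584/125) + (30700352/125)*(nr-2) + (42350656/125)*(nr-2)^2 + (34077888/125)*(nr-2)^3 + (3503552/25)*(nr-2)^4 + (5934892/125)*(nr-2)^5 + (1310856/125)*(nr-2)^6 + (174348/125)*(nr-2)^7 + (10624/125)*(nr-2)^8)*(nr*xx)^0*(3-nr*xx)^3 + (3:ℝ)*((11384928/125) + (32308096/125)*(nr-2) + (8057152/25)*(nr-2)^2 + (28714152/125)*(nr-2)^3 + (2574218/25)*(nr-2)^4 + (3838614/125)*(nr-2)^5 + (797358/125)*(nr-2)^6 + (22442/25)*(nr-2)^7 + (7936/125)*(nr-2)^8)*(nr*xx)^1*(3-nr*xx)^2 + (3:ℝ)*((13786272/125) + (7391568/25)*(nr-2) + (42519864/125)*(nr-2)^2 + (26879916/125)*(nr-2)^3 + (2008184/25)*(nr-2)^4 + (2328836/125)*(nr-2)^5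 + (78672/25)*(nr-2)^6 + (59072/125)*(nr-2)^7 + (5248/125)*(nr-2)^8)*(nr*xx)^2*(3-nr*xx)^1 + (1:ℝ)*((17159616/125) + (44649584/125)*(nr-2) + (49052968/125)*(nr-2)^2 + (5715036/25)*(nr-2)^3 + 72218*(nr-2)^4 + (1405558/125)*(nr-2)^5 + (98862/125)*(nr-2)^6 + (14934/125)*(nr-2)^7 + (512/25)*(nr-2)^8)*(nr*xx)^3*(3-nr*xx)^0) := mul_nonneg (pow_nonneg hb 1) hg1
  have hg2 : (0:ℝ) ≤ (1:ℝ)*((2300448/125) + (6430432/125)*(nr-2) + (7832224/125)*(nr-2)^2 + (1069336/25)*(nr-2)^3 + (87822/5)*(nr-2)^4 + (544724/125)*(nr-2)^5 + (77926/125)*(nr-2)^6 + (5312/125)*(nr-2)^7)*(nr*xx)^0*(3-nr*xx)^3 + (3:ℝ)*((2540448/125) + (6886432/125)*(nr-2) + (8092224/125)*(nr-2)^2 + (1059336/25)*(nr-2)^3 + (83022/5)*(nr-2)^4 + (494724/125)*(nr-2)^5 + (70926/125)*(nr-2)^6 + (5312/125)*(nr-2)^7)*(nr*xx)^1*(3-nr*xx)^2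 + (3:ℝ)*((2780448/125) + (7342432/125)*(nr-2) + (8352224/125)*(nr-2)^2 + (1049336/25)*(nr-2)^3 + (78222/5)*(nr-2)^4 + (444724/125)*(nr-2)^5 + (63926/125)*(nr-2)^6 + (5312/125)*(nr-2)^7)*(nr*xx)^2*(3-nr*xx)^1 + (1:ℝ)*((3020448/125) + (7798432/125)*(nr-2) + (8612224/125)*(nr-2)^2 + (1039336/25)*(nr-2)^3 + (73422/5)*(nr-2)^4 + (394724/125)*(nr-2)^5 + (56926/125)*(nr-2)^6 + (5312/125)*(nr-2)^7)*(nr*xx)^3*(3-nr*xx)^0 := by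
    have l1 := mul_nonneg (mul_nonneg (mul_nonneg (by norm_num : (0:ℝ) ≤ (1:ℝ)) (auxp8 (nr-2) hm)) (pow_nonneg hw 0)) (pow_nonneg hu 3)
    have l2 := mul_nonneg (mul_nonneg (mul_nonneg (by norm_num : (0:ℝ) ≤ (3:ℝ)) (auxp9 (nr-2) hm)) (pow_nonneg hw 1)) (pow_nonneg hu 2)
    have l3 := mul_nonneg (mul_nonneg (mul_nonneg (by norm_num : (0:ℝ) ≤ (3:ℝ)) (auxp10 (nr-2) hm)) (pow_nonneg hw 2)) (pow_nonneg hu 1)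
    have l4 := mul_nonneg (mul_nonneg (mul_nonneg (by norm_num : (0:ℝ) ≤ (1:ℝ)) (auxp11 (nr-2) hm)) (pow_nonneg hw 3)) (pow_nonneg hu 0)
    linarith [l1, l2, l3, l4]
  have hb2 : (0:ℝ) ≤ b^2*((1:ℝ)*((2300448/125) + (6430432/125)*(nr-2) + (7832224/125)*(nr-2)^2 + (1069336/25)*(nr-2)^3 + (87822/5)*(nr-2)^4 + (544724/125)*(nr-2)^5 + (77926/125)*(nr-2)^6 + (5312/125)*(nr-2)^7)*(nr*xx)^0*(3-nr*xx)^3 + (3:ℝ)*((2540448/125) + (6886432/125)*(nr-2) + (8092224/125)*(nr-2)^2 + (1059336/25)*(nr-2)^3 + (83022/5)*(nr-2)^4 + (494724/125)*(nr-2)^5 + (70926/125)*(nr-2)^6 + (5312/125)*(nr-2)^7)*(nr*xx)^1*(3-nr*xx)^2 + (3:ℝ)*((2780448/125) + (7342432/125)*(nr-2) + (8352224/125)*(nr-2)^2 + (1049336/25)*(nr-2)^3 + (78222/5)*(nr-2)^4 + (444724/125)*(nr-2)^5 + (63926/125)*(nr-2)^6 + (5312/125)*(nr-2)^7)*(nr*xx)^2*(3-nr*xx)^1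 + (1:ℝ)*((3020448/125) + (7798432/125)*(nr-2) + (8612224/125)*(nr-2)^2 + (1039336/25)*(nr-2)^3 + (73422/5)*(nr-2)^4 + (394724/125)*(nr-2)^5 + (56926/125)*(nr-2)^6 + (5312/125)*(nr-2)^7)*(nr*xx)^3*(3-nr*xx)^0) := mul_nonneg (pow_nonneg hb 2) hg2
  have hg3 : (0:ℝ) ≤ (1:ℝ)*(1408 + 3520*(nr-2) + 3680*(nr-2)^2 + 2000*(nr-2)^3 + 560*(nr-2)^4 + 64*(nr-2)^5)*(nr*xx)^0*(3-nr*xx)^3 + (3:ℝ)*(1408 + 3520*(nr-2) + 3680*(nr-2)^2 + 2000*(nr-2)^3 + 560*(nr-2)^4 + 64*(nr-2)^5)*(nr*xx)^1*(3-nr*xx)^2 + (3:ℝ)*(1408 + 3520*(nr-2) + 3680*(nr-2)^2 + 2000*(nr-2)^3 + 560*(nr-2)^4 + 64*(nr-2)^5)*(nr*xx)^2*(3-nr*xx)^1 + (1:ℝ)*(1408 + 3520*(nr-2) + 3680*(nr-2)^2 + 2000*(nr-2)^3 + 560*(nr-2)^4 + 64*(nr-2)^5)*(nr*xx)^3*(3-nr*xx)^0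 := by
    have l1 := mul_nonneg (mul_nonneg (mul_nonneg (by norm_num : (0:ℝ) ≤ (1:ℝ)) (auxp12 (nr-2) hm)) (pow_nonneg hw 0)) (pow_nonneg hu 3)
    have l2 := mul_nonneg (mul_nonneg (mul_nonneg (by norm_num : (0:ℝ) ≤ (3:ℝ)) (auxp12 (nr-2) hm)) (pow_nonneg hw 1)) (pow_nonneg hu 2)
    have l3 := mul_nonneg (mul_nonneg (mul_nonneg (by norm_num : (0:ℝ) ≤ (3:ℝ)) (auxp12 (nr-2) hm)) (pow_nonneg hw 2)) (pow_nonneg hu 1)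
    have l4 := mul_nonneg (mul_nonneg (mul_nonneg (by norm_num : (0:ℝ) ≤ (1:ℝ)) (auxp12 (nr-2) hm)) (pow_nonneg hw 3)) (pow_nonneg hu 0)
    linarith [l1, l2, l3, l4]
  have hb3 : (0:ℝ) ≤ b^3*((1:ℝ)*(1408 + 3520*(nr-2) + 3680*(nr-2)^2 + 2000*(nr-2)^3 + 560*(nr-2)^4 + 64*(nr-2)^5)*(nr*xx)^0*(3-nr*xx)^3 + (3:ℝ)*(1408 + 3520*(nr-2) + 3680*(nr-2)^2 + 2000*(nr-2)^3 + 560*(nr-2)^4 + 64*(nr-2)^5)*(nr*xx)^1*(3-nr*xx)^2 + (3:ℝ)*(1408 + 3520*(nr-2) + 3680*(nr-2)^2 + 2000*(nr-2)^3 + 560*(nr-2)^4 + 64*(nr-2)^5)*(nr*xx)^2*(3-nr*xx)^1 + (1:ℝ)*(1408 + 3520*(nr-2) + 3680*(nr-2)^2 + 2000*(nr-2)^3 + 560*(nr-2)^4 + 64*(nr-2)^5)*(nr*xx)^3*(3-nr*xx)^0) := mul_nonneg (pow_nonneg hb 3) hg3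
  have hte : (0:ℝ) ≤ (3:ℝ)*((20817944/125) + (53652568/125)*(nr-2) + (2249424/5)*(nr-2)^2 + (28316346/125)*(nr-2)^3 + (1996329/50)*(nr-2)^4 + (-1255028/125)*(nr-2)^5 + (-557461/125)*(nr-2)^6 + (4618/25)*(nr-2)^7 + (67981/250)*(nr-2)^8 + (784/25)*(nr-2)^9)*(nr*xx)^2*(3-nr*xx) := by
    have l1 := mul_nonneg (mul_nonneg (mul_nonneg (by norm_num : (0:ℝ) ≤ (3:ℝ)) (auxe2 (nr-2) hm)) (pow_nonneg hw 2)) hu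
    linarith [l1]
  have key : 27*(nr^3*Hpoly nr (nr+2+b) xx) = b^0*((1:ℝ)*((14279168/125) + (48074496/125)*(nr-2) + (73715488/125)*(nr-2)^2 + (67563104/125)*(nr-2)^3 + (40854464/125)*(nr-2)^4 + (16962664/125)*(nr-2)^5 + (4852158/125)*(nr-2)^6 + (921124/125)*(nr-2)^7 + (104422/125)*(nr-2)^8 + (5312/125)*(nr-2)^9)*(nr*xx)^0*(3-nr*xx)^3 + (3:ℝ)*((16156544/125) + (46718816/125)*(nr-2) + (59015648/125)*(nr-2)^2 + (42307264/125)*(nr-2)^3 + (18964048/125)*(nr-2)^4 + (5740882/125)*(nr-2)^5 + (1333888/125)*(nr-2)^6 + (265074/125)*(nr-2)^7 + (38532/125)*(nr-2)^8 + (2624/125)*(nr-2)^9)*(nr*xx)^1*(3-nr*xx)^2 + (1:ℝ)*((32151368/125) + (83131752/125)*(nr-2) + (88163344/125)*(nr-2)^2 + (1853054/5)*(nr-2)^3 + (854383/10)*(nr-2)^4 + (213934/125)*(nr-2)^5 + (129861/125)*(nr-2)^6 + (316672/125)*(nr-2)^7 + (39019/50)*(nr-2)^8 + (368/5)*(nr-2)^9)*(nr*xx)^3*(3-nr*xx)^0)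 + b^1*((1:ℝ)*((9955584/125) + (30700352/125)*(nr-2) + (42350656/125)*(nr-2)^2 + (34077888/125)*(nr-2)^3 + (3503552/25)*(nr-2)^4 + (5934892/125)*(nr-2)^5 + (1310856/125)*(nr-2)^6 + (174348/125)*(nr-2)^7 + (10624/125)*(nr-2)^8)*(nr*xx)^0*(3-nr*xx)^3 + (3:ℝ)*((11384928/125) + (32308096/125)*(nr-2) + (8057152/25)*(nr-2)^2 + (28714152/125)*(nr-2)^3 + (2574218/25)*(nr-2)^4 + (3838614/125)*(nr-2)^5 + (797358/125)*(nr-2)^6 + (22442/25)*(nr-2)^7 + (7936/125)*(nr-2)^8)*(nr*xx)^1*(3-nr*xx)^2 + (3:ℝ)*((13786272/125) + (7391568/25)*(nr-2) + (42519864/125)*(nr-2)^2 + (26879916/125)*(nr-2)^3 + (2008184/25)*(nr-2)^4 + (2328836/125)*(nr-2)^5 + (78672/25)*(nr-2)^6 + (59072/125)*(nr-2)^7 + (5248/125)*(nr-2)^8)*(nr*xx)^2*(3-nr*xx)^1 + (1:ℝ)*((17159616/125) + (44649584/125)*(nr-2) + (49052968/125)*(nr-2)^2 + (5715036/25)*(nr-2)^3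 + 72218*(nr-2)^4 + (1405558/125)*(nr-2)^5 + (98862/125)*(nr-2)^6 + (14934/125)*(nr-2)^7 + (512/25)*(nr-2)^8)*(nr*xx)^3*(3-nr*xx)^0) + b^2*((1:ℝ)*((2300448/125) + (6430432/125)*(nr-2) + (7832224/125)*(nr-2)^2 + (1069336/25)*(nr-2)^3 + (87822/5)*(nr-2)^4 + (544724/125)*(nr-2)^5 + (77926/125)*(nr-2)^6 + (5312/125)*(nr-2)^7)*(nr*xx)^0*(3-nr*xx)^3 + (3:ℝ)*((2540448/125) + (6886432/125)*(nr-2) + (8092224/125)*(nr-2)^2 + (1059336/25)*(nr-2)^3 + (83022/5)*(nr-2)^4 + (494724/125)*(nr-2)^5 + (70926/125)*(nr-2)^6 + (5312/125)*(nr-2)^7)*(nr*xx)^1*(3-nr*xx)^2 + (3:ℝ)*((2780448/125) + (7342432/125)*(nr-2) + (8352224/125)*(nr-2)^2 + (1049336/25)*(nr-2)^3 + (78222/5)*(nr-2)^4 + (444724/125)*(nr-2)^5 + (63926/125)*(nr-2)^6 + (5312/125)*(nr-2)^7)*(nr*xx)^2*(3-nr*xx)^1 + (1:ℝ)*((3020448/125)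 + (7798432/125)*(nr-2) + (8612224/125)*(nr-2)^2 + (1039336/25)*(nr-2)^3 + (73422/5)*(nr-2)^4 + (394724/125)*(nr-2)^5 + (56926/125)*(nr-2)^6 + (5312/125)*(nr-2)^7)*(nr*xx)^3*(3-nr*xx)^0) + b^3*((1:ℝ)*(1408 + 3520*(nr-2) + 3680*(nr-2)^2 + 2000*(nr-2)^3 + 560*(nr-2)^4 + 64*(nr-2)^5)*(nr*xx)^0*(3-nr*xx)^3 + (3:ℝ)*(1408 + 3520*(nr-2) + 3680*(nr-2)^2 + 2000*(nr-2)^3 + 560*(nr-2)^4 + 64*(nr-2)^5)*(nr*xx)^1*(3-nr*xx)^2 + (3:ℝ)*(1408 + 3520*(nr-2) + 3680*(nr-2)^2 + 2000*(nr-2)^3 + 560*(nr-2)^4 + 64*(nr-2)^5)*(nr*xx)^2*(3-nr*xx)^1 + (1:ℝ)*(1408 + 3520*(nr-2) + 3680*(nr-2)^2 + 2000*(nr-2)^3 + 560*(nr-2)^4 + 64*(nr-2)^5)*(nr*xx)^3*(3-nr*xx)^0) + (3:ℝ)*((20817944/125) + (53652568/125)*(nr-2) + (2249424/5)*(nr-2)^2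 + (28316346/125)*(nr-2)^3 + (1996329/50)*(nr-2)^4 + (-1255028/125)*(nr-2)^5 + (-557461/125)*(nr-2)^6 + (4618/25)*(nr-2)^7 + (67981/250)*(nr-2)^8 + (784/25)*(nr-2)^9)*(nr*xx)^2*(3-nr*xx) := by
    simp only [Hpoly]; ring
  have hsum : (0:ℝ) ≤ 27*(nr^3*Hpoly nr (nr+2+b) xx) := by rw [key]; linarith [hb0, hb1, hb2, hb3, hte]
  nlinarith [hsum, pow_pos (show (0:ℝ) < nr by linarith) 3]

set_option maxHeartbeats 8000000 in
private lemma aux_region2 (nr b xx : ℝ) (hn : 4 ≤ nr) (hb : 0 ≤ b) (hx : 0 ≤ xx)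
    (hw3 : 3 ≤ nr*xx) : 0 ≤ Hpoly nr (nr+2+b) xx := by
  have hm : (0:ℝ) ≤ nr - 4 := by linarith
  have hv : (0:ℝ) ≤ nr*xx - 3 := by linarith
  have hg1 : (0:ℝ) ≤ ((140962816/125) + (208232576/125)*(nr-4) + (132655328/125)*(nr-4)^2 + (9550584/25)*(nr-4)^3 + (2137142/25)*(nr-4)^4 + (1524044/125)*(nr-4)^5 + (131294/125)*(nr-4)^6 + (5312/125)*(nr-4)^7)*b^2 + ((-2499584/25) + (-131202304/125)*(nr-4) + (-186642784/125)*(nr-4)^2 + (-119999072/125)*(nr-4)^3 + (-8657106/25)*(nr-4)^4 + (-1873814/25)*(nr-4)^5 + (-1213486/125)*(nr-4)^6 + (-87146/125)*(nr-4)^7 + (-2688/125)*(nr-4)^8)*b*(nr*xx-3) + ((17135104/5) + (177714528/25)*(nr-4) + (831655944/125)*(nr-4)^2 + (461282714/125)*(nr-4)^3 + (334215639/250)*(nr-4)^4 + (8195756/25)*(nr-4)^5 + 54349*(nr-4)^6 + (732946/125)*(nr-4)^7 + (93207/250)*(nr-4)^8 + (1328/125)*(nr-4)^9)*(nr*xx-3)^2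 :=
    aux_quad _ _ _ _ _ (auxp17 (nr-4) hm) (auxp18 (nr-4) hm) (auxd1 (nr-4) hm) hb hv
  have hg2 : (0:ℝ) ≤ b*((50176 + 65280*(nr-4) + 34240*(nr-4)^2 + 9040*(nr-4)^3 + 1200*(nr-4)^4 + 64*(nr-4)^5)*b^2 + (-17408 + -66304*(nr-4) + -68800*(nr-4)^2 + -33040*(nr-4)^3 + -8320*(nr-4)^4 + -1072*(nr-4)^5 + -56*(nr-4)^6)*b*(nr*xx-3) + (289280 + 513856*(nr-4) + 395520*(nr-4)^2 + 170884*(nr-4)^3 + 44724*(nr-4)^4 + 7084*(nr-4)^5 + 628*(nr-4)^6 + 24*(nr-4)^7)*(nr*xx-3)^2) :=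
    mul_nonneg hb (aux_quad _ _ _ _ _ (auxp19 (nr-4) hm) (auxp20 (nr-4) hm) (auxd2 (nr-4) hm) hb hv)
  have ht1 : (0:ℝ) ≤ ((1177929216/125) + (1638457056/125)*(nr-4) + (1100720008/125)*(nr-4)^2 + (112540082/25)*(nr-4)^3 + (102250619/50)*(nr-4)^4 + (90621194/125)*(nr-4)^5 + (21670989/125)*(nr-4)^6 + (3202232/125)*(nr-4)^7 + (105259/50)*(nr-4)^8 + (368/5)*(nr-4)^9)*b^0*(nr*xx-3)^0 := by
    have l1 := mul_nonneg (mul_nonneg (auxp13 (nr-4) hm) (pow_nonneg hb 0)) (pow_nonneg hv 0)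
    linarith [l1]
  have ht2 : (0:ℝ) ≤ ((116130816/25) + (1013612096/125)*(nr-4) + (894508656/125)*(nr-4)^2 + (538937068/125)*(nr-4)^3 + (47258733/25)*(nr-4)^4 + (14699146/25)*(nr-4)^5 + (15464014/125)*(nr-4)^6 + (2070814/125)*(nr-4)^7 + (158597/125)*(nr-4)^8 + (1056/25)*(nr-4)^9)*b^0*(nr*xx-3)^1 := by
    have l1 := mul_nonneg (mul_nonneg (auxp14 (nr-4) hm) (pow_nonneg hb 0)) (pow_nonneg hv 1)
    linarith [l1]
  have ht3 : (0:ℝ) ≤ (204800 + 389120*(nr-4) + 323072*(nr-4)^2 + 153088*(nr-4)^3 + 45280*(nr-4)^4 + 8560*(nr-4)^5 + 1010*(nr-4)^6 + 68*(nr-4)^7 + 2*(nr-4)^8)*b^0*(nr*xx-3)^3 := by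
    have l1 := mul_nonneg (mul_nonneg (auxp15 (nr-4) hm) (pow_nonneg hb 0)) (pow_nonneg hv 3)
    linarith [l1]
  have ht4 : (0:ℝ) ≤ ((729580032/125) + (1013373632/125)*(nr-4) + (587952736/125)*(nr-4)^2 + (37156796/25)*(nr-4)^3 + (7212654/25)*(nr-4)^4 + (4993238/125)*(nr-4)^5 + (594658/125)*(nr-4)^6 + (55894/125)*(nr-4)^7 + (512/25)*(nr-4)^8)*b^1*(nr*xx-3)^0 := by
    have l1 := mul_nonneg (mul_nonneg (auxp16 (nr-4) hm) (pow_nonneg hb 1)) (pow_nonneg hv 0)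
    linarith [l1]
  have key : nr^3*Hpoly nr (nr+2+b) xx = ((1177929216/125) + (1638457056/125)*(nr-4) + (1100720008/125)*(nr-4)^2 + (112540082/25)*(nr-4)^3 + (102250619/50)*(nr-4)^4 + (90621194/125)*(nr-4)^5 + (21670989/125)*(nr-4)^6 + (3202232/125)*(nr-4)^7 + (105259/50)*(nr-4)^8 + (368/5)*(nr-4)^9)*b^0*(nr*xx-3)^0 + ((116130816/25) + (1013612096/125)*(nr-4) + (894508656/125)*(nr-4)^2 + (538937068/125)*(nr-4)^3 + (47258733/25)*(nr-4)^4 + (14699146/25)*(nr-4)^5 + (15464014/125)*(nr-4)^6 + (2070814/125)*(nr-4)^7 + (158597/125)*(nr-4)^8 + (1056/25)*(nr-4)^9)*b^0*(nr*xx-3)^1 + (204800 + 389120*(nr-4) + 323072*(nr-4)^2 + 153088*(nr-4)^3 + 45280*(nr-4)^4 + 8560*(nr-4)^5 + 1010*(nr-4)^6 + 68*(nr-4)^7 + 2*(nr-4)^8)*b^0*(nr*xx-3)^3 + ((729580032/125) + (1013373632/125)*(nr-4) + (587952736/125)*(nr-4)^2 + (37156796/25)*(nr-4)^3 + (7212654/25)*(nr-4)^4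 + (4993238/125)*(nr-4)^5 + (594658/125)*(nr-4)^6 + (55894/125)*(nr-4)^7 + (512/25)*(nr-4)^8)*b^1*(nr*xx-3)^0 + (((140962816/125) + (208232576/125)*(nr-4) + (132655328/125)*(nr-4)^2 + (9550584/25)*(nr-4)^3 + (2137142/25)*(nr-4)^4 + (1524044/125)*(nr-4)^5 + (131294/125)*(nr-4)^6 + (5312/125)*(nr-4)^7)*b^2 + ((-2499584/25) + (-131202304/125)*(nr-4) + (-186642784/125)*(nr-4)^2 + (-119999072/125)*(nr-4)^3 + (-8657106/25)*(nr-4)^4 + (-1873814/25)*(nr-4)^5 + (-1213486/125)*(nr-4)^6 + (-87146/125)*(nr-4)^7 + (-2688/125)*(nr-4)^8)*b*(nr*xx-3) + ((17135104/5) + (177714528/25)*(nr-4) + (831655944/125)*(nr-4)^2 + (461282714/125)*(nr-4)^3 + (334215639/250)*(nr-4)^4 + (8195756/25)*(nr-4)^5 + 54349*(nr-4)^6 + (732946/125)*(nr-4)^7 + (93207/250)*(nr-4)^8 + (1328/125)*(nr-4)^9)*(nr*xx-3)^2) + b*((50176 + 65280*(nr-4) + 34240*(nr-4)^2 + 9040*(nr-4)^3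 + 1200*(nr-4)^4 + 64*(nr-4)^5)*b^2 + (-17408 + -66304*(nr-4) + -68800*(nr-4)^2 + -33040*(nr-4)^3 + -8320*(nr-4)^4 + -1072*(nr-4)^5 + -56*(nr-4)^6)*b*(nr*xx-3) + (289280 + 513856*(nr-4) + 395520*(nr-4)^2 + 170884*(nr-4)^3 + 44724*(nr-4)^4 + 7084*(nr-4)^5 + 628*(nr-4)^6 + 24*(nr-4)^7)*(nr*xx-3)^2) := by
    simp only [Hpoly]; ring
  have hsum : (0:ℝ) ≤ nr^3*Hpoly nr (nr+2+b) xx := by rw [key]; linarith [ht1, ht2, ht3, ht4, hg1, hg2]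
  nlinarith [hsum, pow_pos (show (0:ℝ) < nr by linarith) 3]

/-- **Pointwise lower bound for the Zerilli-type potential by the Hardy potential.**
For `n ≥ 2`, `ℓ ≥ 2`, `M > 0` and `r > 0` with `r^{n-1} ≥ 2M`,
`r²(V_{2,nℓ}(r) + V_{3,nℓ}(r)) ≥ (n-1)²[(E_n²-1)/4 - 2MF_n²/r^{n-1}]`. -/
theorem zerilli_potential_hardy_lower_bound
    (n ℓ : ℕ) (hn : 2 ≤ n) (hl : 2 ≤ ℓ)
    (M r : ℝ) (hM : 0 < M) (hr : 0 < r) (hrM : 2*M ≤ r^(n-1)) :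
    r^2 * (V2nl n M r + V3nl n ℓ M r)
      ≥ ((n:ℝ)-1)^2 * ((En n^2 - 1)/4 - 2*M*(Fn n)^2/r^(n-1)) := by
  have hn2 : (2:ℝ) ≤ (n:ℝ) := by exact_mod_cast hn
  have hl2 : (2:ℝ) ≤ (ℓ:ℝ) := by exact_mod_cast hl
  have hs : (0:ℝ) < r^(n-1) := pow_pos hr _
  have hsne : r^(n-1) ≠ 0 := ne_of_gt hs
  have hrne : r ≠ 0 := ne_of_gt hr
  have h2 : r^(2*n-2) = (r^(n-1))^2 := by rw [← pow_mul]; congr 1; omega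
  have h3 : r^(3*n-3) = (r^(n-1))^3 := by rw [← pow_mul]; congr 1; omega
  set X : ℝ := 2*M/r^(n-1) with hXdef
  have hX0 : 0 < X := div_pos (by linarith) hs
  have hX1 : X ≤ 1 := (div_le_one hs).mpr hrM
  set lam : ℝ := ((ℓ:ℝ)-1)*((n:ℝ)+(ℓ:ℝ)) with hlamdef
  have hblam : 0 ≤ lam - ((n:ℝ)+2) := by
    rw [hlamdef]
    nlinarith [mul_nonneg (show (0:ℝ) ≤ (ℓ:ℝ)-2 by linarith) (show (0:ℝ) ≤ (n:ℝ)+(ℓ:ℝ)+1 by linarith)]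
  have hlam0 : (0:ℝ) < lam := by nlinarith
  have hDval : Dnl n ℓ M r = lam + (n:ℝ)*((n:ℝ)+1)*X/2 := by
    rw [Dnl, hXdef, hlamdef]; field_simp; ring
  have hDpos : 0 < Dnl n ℓ M r := by
    rw [hDval]
    have h1 : (0:ℝ) ≤ (n:ℝ)*((n:ℝ)+1)*X/2 := by positivity
    linarith
  have hDne : lam + (n:ℝ)*((n:ℝ)+1)*X/2 ≠ 0 := by rw [← hDval]; exact ne_of_gt hDpos
  have hKden : (0:ℝ) < (16*(n:ℝ)^2-20*(n:ℝ)+20) := by nlinarith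
  have hn1 : (0:ℝ) < (n:ℝ)-1 := by linarith
  have hKnum : (0:ℝ) ≤ (10*(n:ℝ)^4-58*(n:ℝ)^3+134*(n:ℝ)^2-140*(n:ℝ)+80) := by
    nlinarith [pow_nonneg (show (0:ℝ) ≤ (n:ℝ)-2 by linarith) 2,
      pow_nonneg (show (0:ℝ) ≤ (n:ℝ)-2 by linarith) 3,
      pow_nonneg (show (0:ℝ) ≤ (n:ℝ)-2 by linarith) 4, hn2]
  have hKFval : ((3*(n:ℝ)^2 - 12*(n:ℝ) + 16)/4 - (n:ℝ)^2*Pn n/(4*(2*(n:ℝ)^2 + Pn n))) / ((n:ℝ)-1)^2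
      = (10*(n:ℝ)^4-58*(n:ℝ)^3+134*(n:ℝ)^2-140*(n:ℝ)+80)/((16*(n:ℝ)^2-20*(n:ℝ)+20)*((n:ℝ)-1)^2) := by
    rw [Pn]
    have hne1 : 4*(2*(n:ℝ)^2 + (2*(n:ℝ)^2-5*(n:ℝ)+5)) ≠ 0 := by nlinarith
    have hne2 : ((n:ℝ)-1)^2 ≠ 0 := pow_ne_zero 2 (ne_of_gt hn1)
    have hne3 : (16*(n:ℝ)^2-20*(n:ℝ)+20) ≠ 0 := ne_of_gt hKden
    rw [div_sub_div _ _ (by norm_num) hne1, div_div, div_eq_div_iff (mul_ne_zero (by norm_num) hne1 |> fun h => mul_ne_zero h hne2) (mul_ne_zero hne3 hne2)]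
    ring
  have hKF : 0 ≤ ((3*(n:ℝ)^2 - 12*(n:ℝ) + 16)/4 - (n:ℝ)^2*Pn n/(4*(2*(n:ℝ)^2 + Pn n))) / ((n:ℝ)-1)^2 := by
    rw [hKFval]
    exact div_nonneg hKnum (le_of_lt (mul_pos hKden (pow_pos hn1 2)))
  have hF0 : 0 ≤ Fn n := Real.sqrt_nonneg _
  have hF2 : (Fn n)^2 = ((3*(n:ℝ)^2 - 12*(n:ℝ) + 16)/4 - (n:ℝ)^2*Pn n/(4*(2*(n:ℝ)^2 + Pn n))) / ((n:ℝ)-1)^2 := by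
    rw [Fn]; exact Real.sq_sqrt hKF
  have hK2 : (((n:ℝ)-1)^2*(Fn n)^2) = (10*(n:ℝ)^4-58*(n:ℝ)^3+134*(n:ℝ)^2-140*(n:ℝ)+80)/(16*(n:ℝ)^2-20*(n:ℝ)+20) := by
    rw [hF2, hKFval]
    field_simp
  have hKL : (((789*(n:ℝ)-1780)/1000))^2 ≤ (10*(n:ℝ)^4-58*(n:ℝ)^3+134*(n:ℝ)^2-140*(n:ℝ)+80)/(16*(n:ℝ)^2-20*(n:ℝ)+20) := by
    rw [le_div_iff₀ hKden]
    nlinarith [sq_nonneg (199*((n:ℝ)-2)^2 - 731*((n:ℝ)-2)),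
      pow_nonneg (show (0:ℝ) ≤ (n:ℝ)-2 by linarith) 2,
      pow_nonneg (show (0:ℝ) ≤ (n:ℝ)-2 by linarith) 3,
      pow_nonneg (show (0:ℝ) ≤ (n:ℝ)-2 by linarith) 4, hn2]
  have hGL : ((789*(n:ℝ)-1780)/1000) ≤ ((n:ℝ)-1)*Fn n := by
    rcases le_or_gt (((789*(n:ℝ)-1780)/1000)) 0 with h|h
    · exact h.trans (mul_nonneg (by linarith) hF0)
    · nlinarith [hK2, hKL, mul_nonneg (le_of_lt hn1) hF0]
  have hLmul : ((n:ℝ)-1)*(((789*(n:ℝ)-1780)/1000)) ≤ ((n:ℝ)-1)^2*Fn n := by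
    nlinarith [mul_le_mul_of_nonneg_left hGL (le_of_lt hn1)]
  have hLHS : r^2 * (V2nl n M r + V3nl n ℓ M r)
      = ((n:ℝ)^2-10*(n:ℝ)+16)/4 - ((3*(n:ℝ)^2-12*(n:ℝ)+16)/4)*X + (4*lam^3 + (n:ℝ)*((n:ℝ)+2)*lam^2 - (3*lam*((n:ℝ)-2)*(n:ℝ)^2*((n:ℝ)+1) + 3*lam^2*((n:ℝ)-4)*(n:ℝ))*X + (lam*(n:ℝ)*((n:ℝ)+1)*(2*(n:ℝ)^2-3*(n:ℝ)+4) + ((n:ℝ)-4)*((n:ℝ)-2)*(n:ℝ)^2*((n:ℝ)+1)^2/4)*X^2 + (n:ℝ)^4*((n:ℝ)+1)^2/4*X^3)/(4*(Dnl n ℓ M r)^2) := by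
    rw [V2nl, V3nl, h2, h3, hDval, hXdef, hlamdef]
    have hDne2 : ((ℓ:ℝ)-1)*((n:ℝ)+(ℓ:ℝ)) + (n:ℝ)*((n:ℝ)+1)*(2*M/r^(n-1))/2 ≠ 0 := by
      rw [← hXdef, ← hlamdef]; exact hDne
    field_simp
    ring
  have hRHSeq : ((n:ℝ)-1)^2 * ((En n^2 - 1)/4 - 2*M*(Fn n)^2/r^(n-1))
      = ((10*(n:ℝ)^4-58*(n:ℝ)^3+134*(n:ℝ)^2-140*(n:ℝ)+80)/(16*(n:ℝ)^2-20*(n:ℝ)+20))*(1-X) - ((n:ℝ)-1)^2*Fn n := by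
    have e1 : ((n:ℝ)-1)^2 * ((En n^2 - 1)/4 - 2*M*(Fn n)^2/r^(n-1))
        = (((n:ℝ)-1)^2*(Fn n)^2)*(1-X) - ((n:ℝ)-1)^2*Fn n := by
      rw [En, hXdef]; field_simp; ring
    rw [e1, hK2]
  have hHpos : 0 ≤ Hpoly (n:ℝ) lam X := by
    rcases le_or_gt ((n:ℝ)*X) 3 with hc|hc
    · have h := aux_region1 (n:ℝ) (lam-((n:ℝ)+2)) X hn2 hblam (le_of_lt hX0) hc
      have e : (n:ℝ)+2+(lam-((n:ℝ)+2)) = lam := by ring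
      rwa [e] at h
    · have h4 : (3:ℝ) < (n:ℝ) := by nlinarith
      have h4' : (3:ℕ) < n := by exact_mod_cast h4
      have hn4 : (4:ℝ) ≤ (n:ℝ) := by exact_mod_cast h4'
      have h := aux_region2 (n:ℝ) (lam-((n:ℝ)+2)) X hn4 hblam (le_of_lt hX0) (le_of_lt hc)
      have e : (n:ℝ)+2+(lam-((n:ℝ)+2)) = lam := by ring
      rwa [e] at h
  have hfrac : 0 ≤ Hpoly (n:ℝ) lam X / ((16*(n:ℝ)^2-20*(n:ℝ)+20)*(2*(Dnl n ℓ M r))^2) := by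
    apply div_nonneg hHpos
    have : (0:ℝ) < 2*(Dnl n ℓ M r) := by linarith
    exact le_of_lt (mul_pos hKden (pow_pos this 2))
  have hkey : (((n:ℝ)^2-10*(n:ℝ)+16)/4 - ((3*(n:ℝ)^2-12*(n:ℝ)+16)/4)*X + (4*lam^3 + (n:ℝ)*((n:ℝ)+2)*lam^2 - (3*lam*((n:ℝ)-2)*(n:ℝ)^2*((n:ℝ)+1) + 3*lam^2*((n:ℝ)-4)*(n:ℝ))*X + (lam*(n:ℝ)*((n:ℝ)+1)*(2*(n:ℝ)^2-3*(n:ℝ)+4) + ((n:ℝ)-4)*((n:ℝ)-2)*(n:ℝ)^2*((n:ℝ)+1)^2/4)*X^2 + (n:ℝ)^4*((n:ℝ)+1)^2/4*X^3)/(4*(Dnl n ℓ M r)^2))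
      - (((10*(n:ℝ)^4-58*(n:ℝ)^3+134*(n:ℝ)^2-140*(n:ℝ)+80)/(16*(n:ℝ)^2-20*(n:ℝ)+20))*(1-X) - ((n:ℝ)-1)*(((789*(n:ℝ)-1780)/1000)))
      = Hpoly (n:ℝ) lam X / ((16*(n:ℝ)^2-20*(n:ℝ)+20)*(2*(Dnl n ℓ M r))^2) := by
    rw [Hpoly]
    have hDne' : Dnl n ℓ M r ≠ 0 := ne_of_gt hDpos
    have hne3 : (16*(n:ℝ)^2-20*(n:ℝ)+20) ≠ 0 := ne_of_gt hKden
    obtain ⟨K, hK⟩ : ∃ K : ℝ, K = 16*(n:ℝ)^2-20*(n:ℝ)+20 := ⟨_, rfl⟩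
    rw [← hK] at hne3 ⊢
    field_simp
    rw [hK, hDval]
    ring
  linarith [hLHS, hRHSeq, hLmul, hfrac, hkey]
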